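/- arXiv:2202.04371 — 2 statements merged into one kernel-verified Lean document; each statement's English description precedes it below -/
import Mathlib

section
/- Let M be a loopless, coloopless, connected matroid whose proper cyclic flats form a clutter, and suppose the disconnected case is excluded. Then for any two distinct proper cyclic flats F and G of M, |F ∩ G| + r_M(S) ≤ r_M(F) + r_M(G). -/
open Matroid Set

variable {α : Type*}

/-- The rank of a set `Z` in a matroid `M`: the maximum size of an independent subset of `Z`. -/
noncomputable def mrk (M : Matroid α) (Z : Set α) : ℕ :=
  sSup {n | ∃ I, M.Indep I ∧ I ⊆ Z ∧ I.ncard = n}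

/-- Deletion of a set `D` from a matroid `M`. -/
def mdelete (M : Matroid α) (D : Set α) : Matroid α := M ↾ (M.E \ D)

/-- Contraction of a set `C` in a matroid `M`, defined as `(M✶ \ C)✶`. -/
def mcontract (M : Matroid α) (C : Set α) : Matroid α := (mdelete M✶ C)✶

/-- `N` is a minor of `M` if it is obtained by a contraction followed by a deletion. -/
def IsMinorOf (N M : Matroid α) : Prop := ∃ C D, N = mdelete (mcontract M C) D

/-- `M` is an elementary split matroid: its independent sets are the sets `X ⊆ S` with
`|X| ≤ r` and `|X ∩ H i| ≤ r i` for hyperedges `H i ⊆ S` satisfying (H1). -/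
def IsElemSplit (M : Matroid α) : Prop :=
  ∃ (q : ℕ) (H : Fin q → Set α) (r : ℕ) (rr : Fin q → ℕ),
    M.E.Finite ∧ r ≤ M.E.ncard ∧ (∀ i, H i ⊆ M.E) ∧
    (∀ i j : Fin q, i ≠ j → (H i ∩ H j).ncard + r ≤ rr i + rr j) ∧
    ∀ X, X ⊆ M.E → (M.Indep X ↔ X.ncard ≤ r ∧ ∀ i, (X ∩ H i).ncard ≤ rr i)

/-- `M` is (isomorphic to) the uniform matroid `U_{k,n}`. -/
def IsUnif (M : Matroid α) (k n : ℕ) : Prop :=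
  M.E.Finite ∧ M.E.ncard = n ∧ ∀ I, I ⊆ M.E → (M.Indep I ↔ I.ncard ≤ k)

/-- `e` is a loop of `M`. -/
def IsLoopOf (M : Matroid α) (e : α) : Prop := e ∈ M.E ∧ ¬ M.Indep {e}

/-- `e` is a coloop of `M`, i.e. a loop of the dual. -/
def IsColoopOf (M : Matroid α) (e : α) : Prop := IsLoopOf M✶ e

/-- A set `Z` is cyclic in `M` if the restriction `M | Z` has no coloops. -/
def IsCyclicSet (M : Matroid α) (Z : Set α) : Prop :=
  Z ⊆ M.E ∧ ∀ e ∈ Z, ¬ IsColoopOf (M ↾ Z) e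

/-- A proper cyclic flat: a cyclic flat of nonzero rank that is not the ground set. -/
def ProperCyclicFlat (M : Matroid α) (F : Set α) : Prop :=
  M.IsFlat F ∧ IsCyclicSet M F ∧ mrk M F ≠ 0 ∧ F ≠ M.E

/-- `M` is connected: `r(X) + r(S − X) > r(S)` for every nonempty proper `X ⊆ S`. -/
def ConnectedM (M : Matroid α) : Prop :=
  ∀ X, X ⊆ M.E → X.Nonempty → X ≠ M.E → mrk M M.E < mrk M X + mrk M (M.E \ X)

/-- `M` is (isomorphic to) the matroid `U_{0,1} ⊕ U_{1,2} ⊕ U_{1,1}`. -/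
def IsU01U12U11 (M : Matroid α) : Prop :=
  ∃ a b c d : α, ([a, b, c, d] : List α).Nodup ∧ M.E = {a, b, c, d} ∧
    ∀ X, X ⊆ M.E → (M.Indep X ↔ a ∉ X ∧ ¬ ({b, c} : Set α) ⊆ X)

section Aux

variable {α : Type*} {M : Matroid α} {X Y Z I J F G : Set α} {e : α}

lemma mrk_bdd (M : Matroid α) (hfin : M.E.Finite) (Z : Set α) :
    BddAbove {n | ∃ I, M.Indep I ∧ I ⊆ Z ∧ I.ncard = n} := by
  refine ⟨M.E.ncard, ?_⟩
  rintro n ⟨I, hI, -, rfl⟩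
  exact Set.ncard_le_ncard hI.subset_ground hfin

lemma le_mrk (hfin : M.E.Finite) (hJ : M.Indep J) (hJX : J ⊆ X) : J.ncard ≤ mrk M X :=
  le_csSup (mrk_bdd M hfin X) ⟨J, hJ, hJX, rfl⟩

lemma mrk_basis (hfin : M.E.Finite) (hI : M.IsBasis I X) : mrk M X = I.ncard := by
  refine le_antisymm (csSup_le ⟨0, ∅, M.empty_indep, Set.empty_subset _, by simp⟩ ?_)
    (le_mrk hfin hI.indep hI.subset)
  rintro n ⟨J, hJ, hJX, rfl⟩
  obtain ⟨J', hJ', hJJ'⟩ := hJ.subset_isBasis_of_subset hJX hI.subset_ground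
  have hcard : J'.encard = I.encard := hJ'.encard_eq_encard hI
  have hJ'fin : J'.Finite := hfin.subset hJ'.indep.subset_ground
  calc J.ncard ≤ J'.ncard := Set.ncard_le_ncard hJJ' hJ'fin
    _ = I.ncard := by rw [Set.ncard_def, Set.ncard_def, hcard]

lemma mrk_mono (hfin : M.E.Finite) (hXY : X ⊆ Y) : mrk M X ≤ mrk M Y := by
  refine csSup_le ⟨0, ∅, M.empty_indep, Set.empty_subset _, by simp⟩ ?_
  rintro n ⟨J, hJ, hJX, rfl⟩
  exact le_mrk hfin hJ (hJX.trans hXY)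

lemma mrk_closure (hfin : M.E.Finite) (hX : X ⊆ M.E) : mrk M (M.closure X) = mrk M X := by
  obtain ⟨I, hI⟩ := M.exists_isBasis X
  rw [mrk_basis hfin hI, mrk_basis hfin hI.isBasis_closure_right]

lemma mrk_submod (hfin : M.E.Finite) (hX : X ⊆ M.E) (hY : Y ⊆ M.E) :
    mrk M (X ∩ Y) + mrk M (X ∪ Y) ≤ mrk M X + mrk M Y := by
  obtain ⟨I, hI⟩ := M.exists_isBasis (X ∩ Y) ((Set.inter_subset_left).trans hX)
  obtain ⟨J, hJ, hIJ⟩ := hI.indep.subset_isBasis_of_subset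
    (hI.subset.trans (by exact (Set.inter_subset_left).trans Set.subset_union_left))
    (Set.union_subset hX hY)
  have hJfin : J.Finite := hfin.subset hJ.indep.subset_ground
  have hJXY : (J ∩ X) ∪ (J ∩ Y) = J := by
    rw [← Set.inter_union_distrib_left, Set.inter_eq_self_of_subset_left hJ.subset]
  have hJinter : (J ∩ X) ∩ (J ∩ Y) = I := by
    have h1 : (J ∩ X) ∩ (J ∩ Y) = J ∩ (X ∩ Y) := by
      rw [Set.inter_inter_inter_comm, Set.inter_self]
    rw [h1]
    refine (hI.eq_of_subset_indep (hJ.indep.inter_right _)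
      (Set.subset_inter hIJ hI.subset) Set.inter_subset_right).symm
  have hcard := Set.ncard_inter_add_ncard_union (J ∩ X) (J ∩ Y)
    (hJfin.subset Set.inter_subset_left) (hJfin.subset Set.inter_subset_left)
  rw [hJXY, hJinter] at hcard
  rw [mrk_basis hfin hI, mrk_basis hfin hJ, hcard]
  exact Nat.add_le_add (le_mrk hfin (hJ.indep.inter_right X) Set.inter_subset_right)
    (le_mrk hfin (hJ.indep.inter_right Y) Set.inter_subset_right)

lemma not_coloop_restrict_iff (hZ : Z ⊆ M.E) (he : e ∈ Z) :
    ¬ IsColoopOf (M ↾ Z) e ↔ e ∈ M.closure (Z \ {e}) := by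
  constructor
  · intro h
    have hind : (M ↾ Z)✶.Indep {e} := by
      by_contra hni
      exact h ⟨by simpa using he, hni⟩
    rw [Matroid.dual_indep_iff_exists'] at hind
    obtain ⟨-, B, hB, hdisj⟩ := hind
    rw [Matroid.isBase_restrict_iff' ] at hB
    have hBZ : M.IsBasis B Z := hB.isBasis_inter_ground.isBasis_subset hB.subset
      (by rw [Set.inter_eq_self_of_subset_left hZ])
    have heB : e ∉ B := fun h' => hdisj.ne_of_mem (Set.mem_singleton e) h' rfl
    have hBsub : B ⊆ Z \ {e} := Set.subset_diff_singleton hBZ.subset heB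
    exact M.closure_subset_closure hBsub (hBZ.subset_closure he)
  · intro h hcol
    obtain ⟨I, hI⟩ := M.exists_isBasis (Z \ {e}) ((Set.diff_subset).trans hZ)
    have heI : e ∈ M.closure I := by rwa [hI.closure_eq_closure]
    have hIZ : M.IsBasis I Z := hI.indep.isBasis_of_subset_of_subset_closure
      (hI.subset.trans Set.diff_subset)
      (fun x hx => by
        rcases eq_or_ne x e with rfl | hne
        · exact heI
        · exact hI.subset_closure ⟨hx, hne⟩)
    have hBase : (M ↾ Z).IsBase I := hIZ.restrict_isBase
    have : (M ↾ Z)✶.Indep {e} := by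
      rw [Matroid.dual_indep_iff_exists' ]
      refine ⟨by simpa using he, I, hBase, ?_⟩
      simp only [Set.disjoint_singleton_left]
      exact fun heI' => (hI.subset heI').2 rfl
    exact hcol.2 this

lemma cyclic_of_forall (hZ : Z ⊆ M.E) (h : ∀ e ∈ Z, e ∈ M.closure (Z \ {e})) :
    IsCyclicSet M Z :=
  ⟨hZ, fun e he => (not_coloop_restrict_iff hZ he).mpr (h e he)⟩

lemma cyclic_forall_closure (h : IsCyclicSet M Z) : ∀ e ∈ Z, e ∈ M.closure (Z \ {e}) :=
  fun e he => (not_coloop_restrict_iff h.1 he).mp (h.2 e he)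

lemma flat_closure (M : Matroid α) (X : Set α) : M.IsFlat (M.closure X) :=
  ⟨fun I X' hI hIX' => hIX'.subset_closure.trans
    (by rw [hI.closure_eq_closure, Matroid.closure_closure]), M.closure_subset_ground X⟩

end Aux

theorem stmt16 {α : Type*} (M : Matroid α) (hfin : M.E.Finite)
    (hloopless : ∀ e, ¬ IsLoopOf M e) (hcoloopless : ∀ e, ¬ IsColoopOf M e)
    (hconn : ConnectedM M)
    (hclutter : ∀ X Y, ProperCyclicFlat M X → ProperCyclicFlat M Y → X ⊆ Y → X = Y) :
    ∀ F G, ProperCyclicFlat M F → ProperCyclicFlat M G → F ≠ G →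
      (F ∩ G).ncard + mrk M M.E ≤ mrk M F + mrk M G := by
  intro F G hF hG hne
  obtain ⟨hFflat, hFcyc, hFrk, hFne⟩ := hF
  obtain ⟨hGflat, hGcyc, hGrk, hGne⟩ := hG
  have hFE : F ⊆ M.E := hFflat.subset_ground
  have hGE : G ⊆ M.E := hGflat.subset_ground
  have hFG_E : F ∪ G ⊆ M.E := Set.union_subset hFE hGE
  set Z := M.closure (F ∪ G) with hZdef
  have hFZ : F ⊆ Z := (Set.subset_union_left).trans (M.subset_closure _ hFG_E)
  have hGZ : G ⊆ Z := (Set.subset_union_right).trans (M.subset_closure _ hFG_E)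
  have hZE : Z ⊆ M.E := M.closure_subset_ground _
  -- Z is cyclic
  have hZcyc : IsCyclicSet M Z := by
    refine cyclic_of_forall hZE (fun e he => ?_)
    by_cases heF : e ∈ F
    · have h1 := cyclic_forall_closure hFcyc e heF
      exact M.closure_subset_closure
        (Set.diff_subset_diff_left hFZ) h1
    by_cases heG : e ∈ G
    · have h1 := cyclic_forall_closure hGcyc e heG
      exact M.closure_subset_closure (Set.diff_subset_diff_left hGZ) h1
    · have hsub : F ∪ G ⊆ Z \ {e} :=
        Set.subset_diff_singleton (Set.union_subset hFZ hGZ)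
          (fun h => h.elim heF heG)
      have : Z ⊆ M.closure (Z \ {e}) := by
        rw [hZdef]
        exact M.closure_subset_closure_of_subset_closure
          ((M.subset_closure _ hFG_E).trans
            (M.closure_subset_closure hsub))
      exact this he
  -- Z = M.E
  have hZeq : Z = M.E := by
    by_contra hZne
    have hZrk : mrk M Z ≠ 0 := by
      intro h0
      exact hFrk (Nat.le_zero.mp (h0 ▸ mrk_mono hfin hFZ))
    have hZpcf : ProperCyclicFlat M Z := ⟨flat_closure M _, hZcyc, hZrk, hZne⟩
    have h1 : F = Z := hclutter F Z ⟨hFflat, hFcyc, hFrk, hFne⟩ hZpcf hFZ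
    have h2 : G = F := hclutter G F ⟨hGflat, hGcyc, hGrk, hGne⟩
      ⟨hFflat, hFcyc, hFrk, hFne⟩ (h1 ▸ hGZ)
    exact hne h2.symm
  -- F ∩ G is independent
  have hind : M.Indep (F ∩ G) := by
    by_contra hdep
    have hFGE : F ∩ G ⊆ M.E := (Set.inter_subset_left).trans hFE
    have hfinFG : (F ∩ G).Finite := hfin.subset hFGE
    obtain ⟨C, hCs, hCmin⟩ := Set.exists_min_image
      {C : Set α | C ⊆ F ∩ G ∧ ¬ M.Indep C} Set.ncard
      (hfinFG.finite_subsets.subset (fun C hC => hC.1))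
      ⟨F ∩ G, Set.Subset.rfl, hdep⟩
    have hCF : C ⊆ F := hCs.1.trans Set.inter_subset_left
    have hCG : C ⊆ G := hCs.1.trans Set.inter_subset_right
    have hCE : C ⊆ M.E := hCF.trans hFE
    have hCfin : C.Finite := hfin.subset hCE
    have hCdel : ∀ e ∈ C, M.Indep (C \ {e}) := by
      intro e he
      by_contra hd
      have h1 : C.ncard ≤ (C \ {e}).ncard :=
        hCmin _ ⟨(Set.diff_subset).trans hCs.1, hd⟩
      have h2 : (C \ {e}).ncard < C.ncard :=
        Set.ncard_lt_ncard (Set.sdiff_singleton_ssubset.mpr he) hCfin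
      omega
    set W := M.closure C with hWdef
    have hCW : C ⊆ W := M.subset_closure C hCE
    have hWF : W ⊆ F := by
      rw [← hFflat.closure]
      exact M.closure_subset_closure hCF
    have hWG : W ⊆ G := by
      rw [← hGflat.closure]
      exact M.closure_subset_closure hCG
    have hWE : W ⊆ M.E := M.closure_subset_ground _
    have hWcyc : IsCyclicSet M W := by
      refine cyclic_of_forall hWE (fun e he => ?_)
      by_cases heC : e ∈ C
      · have hei : e ∈ M.closure (C \ {e}) := by
          by_contra hni
          have := ((hCdel e heC).insert_indep_iff_of_notMem
            (fun h => h.2 rfl)).mpr ⟨hCE heC, hni⟩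
          rw [Set.insert_diff_singleton, Set.insert_eq_self.mpr heC] at this
          exact hCs.2 this
        exact M.closure_subset_closure
          (Set.diff_subset_diff_left hCW) hei
      · have hsub : C ⊆ W \ {e} := Set.subset_diff_singleton hCW heC
        exact M.closure_subset_closure hsub he
    have hWrk : mrk M W ≠ 0 := by
      have hCne : C.Nonempty := by
        rw [Set.nonempty_iff_ne_empty]
        intro h
        rw [h] at hCs
        exact hCs.2 M.empty_indep
      obtain ⟨e, he⟩ := hCne
      have hei : M.Indep {e} := by
        by_contra hni
        exact hloopless e ⟨hCE he, hni⟩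
      have h1 : (1 : ℕ) ≤ mrk M W := by
        have := le_mrk hfin hei (Set.singleton_subset_iff.mpr (hCW he))
        simpa using this
      omega
    have hWne : W ≠ M.E := fun h =>
      hFne (Set.Subset.antisymm hFE (h ▸ hWF))
    have hWpcf : ProperCyclicFlat M W := ⟨flat_closure M _, hWcyc, hWrk, hWne⟩
    have h1 : W = F := hclutter W F hWpcf ⟨hFflat, hFcyc, hFrk, hFne⟩ hWF
    have h2 : W = G := hclutter W G hWpcf ⟨hGflat, hGcyc, hGrk, hGne⟩ hWG
    exact hne (h1 ▸ h2)
  -- conclude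
  have h1 : (F ∩ G).ncard ≤ mrk M (F ∩ G) := le_mrk hfin hind Set.Subset.rfl
  have h2 : mrk M M.E = mrk M (F ∪ G) := by
    rw [← hZeq, hZdef, mrk_closure hfin hFG_E]
  have h3 := mrk_submod hfin hFE hGE
  omega
end

section
/- If M is a connected binary elementary split matroid of rank at least 3 and corank at least 3 that is not paving, given by a non-redundant representation H_1,...,H_q, r, r_1,...,r_q, then q = 1 and M is isomorphic to the r-truncation of U_{1,|H_1|} ⊕ U_{r,r}, i.e., M is obtained from U_{r−1,r} by adding parallel copies of one element. -/
open Matroid Set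

variable {α : Type*}

private lemma mrk_le_of' {M : Matroid α} {Z : Set α} {k : ℕ}
    (h : ∀ I, M.Indep I → I ⊆ Z → I.ncard ≤ k) : mrk M Z ≤ k := by
  refine csSup_le ⟨0, ∅, M.empty_indep, empty_subset _, by simp⟩ ?_
  rintro n ⟨I, hI, hIZ, rfl⟩
  exact h I hI hIZ

private lemma le_mrk_of' {M : Matroid α} {Z I : Set α} {k : ℕ}
    (hub : ∀ J, M.Indep J → J.ncard ≤ k)
    (hI : M.Indep I) (hIZ : I ⊆ Z) : I.ncard ≤ mrk M Z :=
  le_csSup ⟨k, by rintro n ⟨J, hJ, _, rfl⟩; exact hub J hJ⟩ ⟨I, hI, hIZ, rfl⟩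

private lemma exists_indep_card' {M : Matroid α} {r : ℕ}
    (hub : ∀ I, M.Indep I → I.ncard ≤ r)
    (hrank : mrk M M.E = r) : ∃ J, M.Indep J ∧ J.ncard = r := by
  have hne : {n | ∃ I, M.Indep I ∧ I ⊆ M.E ∧ I.ncard = n}.Nonempty :=
    ⟨0, ∅, M.empty_indep, empty_subset _, by simp⟩
  have hbdd : BddAbove {n | ∃ I, M.Indep I ∧ I ⊆ M.E ∧ I.ncard = n} :=
    ⟨r, by rintro n ⟨J, hJ, _, rfl⟩; exact hub J hJ⟩
  have hmem : r ∈ {n | ∃ I, M.Indep I ∧ I ⊆ M.E ∧ I.ncard = n} := by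
    rw [← hrank]; exact Nat.sSup_mem hne hbdd
  obtain ⟨J, hJ, _, hJc⟩ := hmem
  exact ⟨J, hJ, hJc⟩

private lemma base_card' {M : Matroid α} (hfin : M.E.Finite) {r : ℕ}
    (hub : ∀ I, M.Indep I → I.ncard ≤ r)
    (hex : ∃ J, M.Indep J ∧ J.ncard = r) {B : Set α} (hB : M.IsBase B) : B.ncard = r := by
  obtain ⟨J, hJ, hJc⟩ := hex
  refine le_antisymm (hub B hB.indep) ?_
  by_contra hlt
  push_neg at hlt
  have hBfin : B.Finite := hfin.subset hB.subset_ground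
  have hJfin : J.Finite := hfin.subset hJ.subset_ground
  have hcard : B.encard < J.encard := by
    rw [← hBfin.cast_ncard_eq, ← hJfin.cast_ncard_eq]
    exact_mod_cast (by omega : B.ncard < J.ncard)
  obtain ⟨e, he, hi⟩ := hB.indep.augment hJ hcard
  exact (hB.insert_dep ⟨hJ.subset_ground he.1, he.2⟩).not_indep hi

private lemma u24_minor' {M : Matroid α} (hfin : M.E.Finite) {r : ℕ} (hr : 3 ≤ r)
    (hub : ∀ I, M.Indep I → I.ncard ≤ r)
    (hbc : ∀ B, M.IsBase B → B.ncard = r)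
    {Z P : Set α} (hZE : Z ⊆ M.E) (hPE : P ⊆ M.E) (hdisj : Disjoint Z P)
    (hZc : Z.ncard = r - 2) (hPc : P.ncard = 4)
    (hind : ∀ I, I ⊆ P → I.ncard ≤ 2 → M.Indep (Z ∪ I)) :
    ∃ N : Matroid α, IsMinorOf N M ∧ IsUnif N 2 4 := by
  classical
  set E1 : Set α := M.E \ Z with hE1def
  have hE1sub : E1 ⊆ M✶.E := diff_subset
  have hE1subE : E1 ⊆ M.E := diff_subset
  have hPfin : P.Finite := hfin.subset hPE
  have hZfin : Z.Finite := hfin.subset hZE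
  have hE1fin : E1.Finite := hfin.subset hE1subE
  have hPE1 : P ⊆ E1 := fun x hx => ⟨hPE hx, disjoint_right.1 hdisj hx⟩
  have hset : E1 \ (M.E \ (Z ∪ P)) = P := by
    ext x
    constructor
    · rintro ⟨⟨h1, h2⟩, h3⟩
      by_contra hxP
      exact h3 ⟨h1, fun h => h.elim h2 hxP⟩
    · intro hxP
      exact ⟨hPE1 hxP, fun h => h.2 (Or.inr hxP)⟩
  set N : Matroid α := mdelete (mcontract M Z) (M.E \ (Z ∪ P)) with hN
  have hNE : N.E = P := by
    show E1 \ (M.E \ (Z ∪ P)) = P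
    exact hset
  have hNindep : ∀ I, N.Indep I ↔
      ((I ⊆ E1 ∧ ∃ B, (M✶ ↾ E1).IsBase B ∧ Disjoint I B) ∧ I ⊆ P) := by
    intro I
    rw [← hset]
    exact Iff.rfl
  have hindep_dir : ∀ I, I ⊆ P → I.ncard ≤ 2 → N.Indep I := by
    intro I hIP hI2
    have hZI : M.Indep (Z ∪ I) := hind I hIP hI2
    obtain ⟨B0, hB0, hZIB0⟩ := hZI.exists_isBase_superset
    have hZB0 : Z ⊆ B0 := subset_union_left.trans hZIB0
    have hIB0 : I ⊆ B0 := subset_union_right.trans hZIB0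
    have hB1i : M✶.Indep (E1 \ B0) := by
      rw [dual_indep_iff_exists']
      exact ⟨diff_subset.trans hE1sub, B0, hB0, disjoint_sdiff_left⟩
    have hB1basis : M✶.IsBasis (E1 \ B0) E1 := by
      refine hB1i.isBasis_of_forall_insert diff_subset ?_
      intro x hx
      have hxE1 : x ∈ E1 := hx.1
      have hxB0 : x ∈ B0 := by
        by_contra h
        exact hx.2 ⟨hxE1, h⟩
      rw [dep_iff]
      constructor
      · rw [dual_indep_iff_exists']
        rintro ⟨-, B', hB', hdisjB'⟩
        have hB'sub : B' ⊆ B0 := by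
          intro y hy
          have hyE : y ∈ M.E := hB'.subset_ground hy
          by_contra hyB0
          have hyZ : y ∉ Z := fun h => hyB0 (hZB0 h)
          exact (disjoint_right.1 hdisjB' hy)
            (mem_insert_iff.mpr (Or.inr ⟨⟨hyE, hyZ⟩, hyB0⟩))
        have hBeq : B' = B0 := hB'.eq_of_subset_indep hB0.indep hB'sub
        exact (disjoint_right.1 hdisjB' (hBeq.symm ▸ hxB0)) (mem_insert x _)
      · exact insert_subset hxE1.1 (diff_subset.trans hE1subE)
    refine (hNindep I).mpr ⟨⟨hPE1.trans' hIP, E1 \ B0,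
      (isBase_restrict_iff hE1sub).mpr hB1basis, ?_⟩, hIP⟩
    exact disjoint_left.mpr fun x hxI hxB1 => hxB1.2 (hIB0 hxI)
  have hdep_dir : ∀ I, I ⊆ P → N.Indep I → I.ncard ≤ 2 := by
    intro I hIP hNI
    by_contra h2
    push_neg at h2
    obtain ⟨I3, hI3I, hI3c⟩ := Set.exists_subset_card_eq (show 3 ≤ I.ncard by omega)
    have hNI3 := (hNindep I3).mp (hNI.subset hI3I)
    obtain ⟨⟨hI3E1, B1, hB1base, hdisjI3B1⟩, hI3P⟩ := hNI3
    have hZind : M.Indep Z := by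
      have := hind ∅ (empty_subset _) (by simp)
      rwa [union_empty] at this
    obtain ⟨B0, hB0, hZB0⟩ := hZind.exists_isBase_superset
    have hB0c : B0.ncard = r := hbc B0 hB0
    have hB0fin : B0.Finite := hfin.subset hB0.subset_ground
    have hE1B0 : E1 ∩ B0 = B0 \ Z := by
      ext x
      constructor
      · rintro ⟨⟨-, hxZ⟩, hxB0⟩
        exact ⟨hxB0, hxZ⟩
      · rintro ⟨hxB0, hxZ⟩
        exact ⟨⟨hB0.subset_ground hxB0, hxZ⟩, hxB0⟩
    have hE1B0c : (E1 ∩ B0).ncard = 2 := by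
      rw [hE1B0, ncard_diff hZB0 hZfin, hB0c, hZc]
      omega
    have hJc : (E1 \ B0).ncard = E1.ncard - 2 := by
      rw [show E1 \ B0 = E1 \ (E1 ∩ B0) by rw [diff_self_inter],
        ncard_diff inter_subset_left (hE1fin.subset inter_subset_left), hE1B0c]
    have hJindep : (M✶ ↾ E1).Indep (E1 \ B0) := by
      rw [restrict_indep_iff, dual_indep_iff_exists']
      exact ⟨⟨diff_subset.trans hE1sub, B0, hB0, disjoint_sdiff_left⟩, diff_subset⟩
    have hB1E1 : B1 ⊆ E1 := hB1base.subset_ground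
    have hB1fin : B1.Finite := hE1fin.subset hB1E1
    have hB1ge : (E1 \ B0).ncard ≤ B1.ncard := by
      by_contra hlt
      push_neg at hlt
      have hcard : B1.encard < (E1 \ B0).encard := by
        rw [← hB1fin.cast_ncard_eq, ← (hE1fin.subset diff_subset).cast_ncard_eq]
        exact_mod_cast hlt
      obtain ⟨e, he, hins⟩ := hB1base.indep.augment hJindep hcard
      exact ((hB1base.insert_dep ⟨he.1.1, he.2⟩).not_indep) hins
    have hB1dualind : M✶.Indep B1 := ((isBase_restrict_iff hE1sub).mp hB1base).indep
    obtain ⟨-, Bh, hBh, hdisjB1Bh⟩ := dual_indep_iff_exists'.mp hB1dualind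
    have hBhc : Bh.ncard = r := hbc Bh hBh
    have hBhsub : Bh ⊆ Z ∪ (E1 \ B1) := by
      intro y hy
      have hyE : y ∈ M.E := hBh.subset_ground hy
      by_cases hyZ : y ∈ Z
      · exact Or.inl hyZ
      · exact Or.inr ⟨⟨hyE, hyZ⟩, disjoint_right.1 hdisjB1Bh hy⟩
    have hE1B1c : (E1 \ B1).ncard ≤ 2 := by
      rw [ncard_diff hB1E1 hB1fin]
      have h1 : B1.ncard ≤ E1.ncard := ncard_le_ncard hB1E1 hE1fin
      have h2' : E1.ncard - 2 ≤ B1.ncard := hJc ▸ hB1ge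
      omega
    have hcub : (Z ∪ (E1 \ B1)).ncard ≤ r := by
      refine le_trans (ncard_union_le _ _) ?_
      omega
    have hBheq : Bh = Z ∪ (E1 \ B1) :=
      eq_of_subset_of_ncard_le hBhsub (by omega)
        (hZfin.union (hE1fin.subset diff_subset))
    have hZI3 : M.Indep (Z ∪ I3) := by
      refine hBh.indep.subset ?_
      rw [hBheq]
      refine union_subset_union_right Z ?_
      intro x hx
      exact ⟨hI3E1 hx, disjoint_left.1 hdisjI3B1 hx⟩
    have hZI3c := hub _ hZI3
    have hdisjZI3 : Disjoint Z I3 := disjoint_of_subset_right (hI3I.trans hIP) hdisj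
    rw [ncard_union_eq hdisjZI3 hZfin (hPfin.subset (hI3I.trans hIP))] at hZI3c
    omega
  refine ⟨N, ⟨Z, M.E \ (Z ∪ P), hN⟩, ?_, ?_, ?_⟩
  · rw [hNE]; exact hPfin
  · rw [hNE]; exact hPc
  · intro I hIP
    rw [hNE] at hIP
    exact ⟨hdep_dir I hIP, hindep_dir I hIP⟩

theorem stmt17 {α : Type*} (M : Matroid α) (hfin : M.E.Finite)
    (hconn : ConnectedM M)
    (hbinary : ¬ ∃ N : Matroid α, IsMinorOf N M ∧ IsUnif N 2 4)
    (q r : ℕ) (H : Fin q → Set α) (rr : Fin q → ℕ)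
    (hrank : mrk M M.E = r) (hr3 : 3 ≤ r) (hcorank : r + 3 ≤ M.E.ncard)
    (hnotpaving : ¬ ∀ X, X ⊆ M.E → X.ncard + 1 ≤ r → M.Indep X)
    (hH : ∀ i, H i ⊆ M.E) (hrS : r ≤ M.E.ncard)
    (h1 : ∀ i j : Fin q, i ≠ j → (H i ∩ H j).ncard + r ≤ rr i + rr j)
    (h2 : ∀ i, r ≤ (M.E \ H i).ncard + rr i)
    (h3 : ∀ i, rr i + 1 ≤ r)
    (h4 : ∀ i, rr i + 1 ≤ (H i).ncard)
    (hMI : ∀ X, X ⊆ M.E → (M.Indep X ↔ X.ncard ≤ r ∧ ∀ i, (X ∩ H i).ncard ≤ rr i)) :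
    q = 1 ∧ ∀ i : Fin q, rr i = 1 ∧ (M.E \ H i).ncard = r ∧
      ∀ X, X ⊆ M.E → (M.Indep X ↔ X.ncard ≤ r ∧ (X ∩ H i).ncard ≤ 1) := by
  classical
  have hub : ∀ I, M.Indep I → I.ncard ≤ r := fun I hI => ((hMI I hI.subset_ground).mp hI).1
  have hfacts : ∀ I, M.Indep I → ∀ j, (I ∩ H j).ncard ≤ rr j :=
    fun I hI => ((hMI I hI.subset_ground).mp hI).2
  have hbc : ∀ B, M.IsBase B → B.ncard = r :=
    fun B hB => base_card' hfin hub (exists_indep_card' hub hrank) hB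
  -- non-paving witness
  push_neg at hnotpaving
  obtain ⟨X0, hX0S, hX0c, hX0d⟩ := hnotpaving
  have hX0fin := hfin.subset hX0S
  have hviol : ∃ i, rr i + 1 ≤ (X0 ∩ H i).ncard := by
    by_contra hc
    push_neg at hc
    exact hX0d ((hMI X0 hX0S).mpr ⟨by omega, fun i => by have := hc i; omega⟩)
  obtain ⟨i, hi⟩ := hviol
  have hXHle : (X0 ∩ H i).ncard ≤ X0.ncard := ncard_le_ncard inter_subset_left hX0fin
  have hs2 : rr i + 2 ≤ r := by omega
  have hHifin : (H i).Finite := hfin.subset (hH i)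
  have hcompfin : (M.E \ H i).Finite := hfin.subset diff_subset
  have hcompcard : (M.E \ H i).ncard + (H i).ncard = M.E.ncard :=
    ncard_diff_add_ncard_of_subset (hH i) hfin
  have hcomplub := h2 i
  -- rr i ≥ 1 : no loops, by connectivity
  have hrrpos : 1 ≤ rr i := by
    by_contra h0
    push_neg at h0
    obtain ⟨e, he⟩ := nonempty_of_ncard_ne_zero (s := H i) (by have := h4 i; omega)
    have heE : e ∈ M.E := hH i he
    have hmrk1 : mrk M {e} ≤ 0 := by
      apply mrk_le_of'
      intro I hI hIe
      rcases subset_singleton_iff_eq.mp hIe with rfl | rfl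
      · simp
      · exfalso
        have hfi := hfacts _ hI i
        rw [inter_eq_self_of_subset_left (singleton_subset_iff.mpr he),
          ncard_singleton] at hfi
        omega
    have hne : ({e} : Set α) ≠ M.E := by
      intro h
      have : M.E.ncard = 1 := by rw [← h]; simp
      omega
    have hc := hconn {e} (singleton_subset_iff.mpr heE) ⟨e, rfl⟩ hne
    have hrest : mrk M (M.E \ {e}) ≤ r := mrk_le_of' (fun I hI _ => hub I hI)
    rw [hrank] at hc
    omega
  -- the complement of H i is small (else U_{2,4} minor outside H i)
  have hco : (M.E \ H i).ncard ≤ r - rr i + 1 := by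
    by_contra hcon
    push_neg at hcon
    obtain ⟨V, hVsub, hVc⟩ := Set.exists_subset_card_eq
      (show r - rr i + 2 ≤ (M.E \ H i).ncard by omega)
    have hVfin := hcompfin.subset hVsub
    obtain ⟨P, hPV, hPc⟩ := Set.exists_subset_card_eq (show 4 ≤ V.ncard by omega)
    obtain ⟨Y, hYsub, hYc⟩ := Set.exists_subset_card_eq
      (show rr i ≤ (H i).ncard by have := h4 i; omega)
    have hYfin : Y.Finite := hHifin.subset hYsub
    set W : Set α := V \ P with hW
    have hWfin : W.Finite := hVfin.subset diff_subset
    have hWc : W.ncard = r - rr i - 2 := by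
      rw [hW, ncard_diff hPV (hVfin.subset hPV), hVc, hPc]
      omega
    set Z : Set α := W ∪ Y with hZ
    have hdisjWY : Disjoint W Y :=
      disjoint_left.mpr fun x hxW hxY => (hVsub hxW.1).2 (hYsub hxY)
    have hZc : Z.ncard = r - 2 := by
      rw [hZ, ncard_union_eq hdisjWY hWfin hYfin, hWc, hYc]
      omega
    have hZE : Z ⊆ M.E :=
      union_subset (fun x hx => (hVsub hx.1).1) (hYsub.trans (hH i))
    have hPE' : P ⊆ M.E := fun x hx => (hVsub (hPV hx)).1
    have hdisjZP : Disjoint Z P := by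
      rw [hZ, disjoint_union_left]
      exact ⟨disjoint_sdiff_left,
        disjoint_left.mpr fun x hxY hxP => (hVsub (hPV hxP)).2 (hYsub hxY)⟩
    have hind : ∀ I, I ⊆ P → I.ncard ≤ 2 → M.Indep (Z ∪ I) := by
      intro I hIP hI2
      have hIE : I ⊆ M.E := hIP.trans hPE'
      have hIfin : I.Finite := hfin.subset hIE
      apply (hMI _ (union_subset hZE hIE)).mpr
      constructor
      · have := ncard_union_le Z I
        omega
      · intro j
        by_cases hji : j = i
        · subst hji
          have hsub : (Z ∪ I) ∩ H j ⊆ Y := by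
            rintro x ⟨hx1, hx2⟩
            simp only [hZ, mem_union] at hx1
            rcases hx1 with (hxW | hxY) | hxI
            · exact absurd hx2 (hVsub hxW.1).2
            · exact hxY
            · exact absurd hx2 (hVsub (hPV (hIP hxI))).2
          have := ncard_le_ncard hsub hYfin
          omega
        · have hsub : (Z ∪ I) ∩ H j ⊆ (H i ∩ H j) ∪ (W ∪ I) := by
            rintro x ⟨hx1, hx2⟩
            simp only [hZ, mem_union] at hx1
            rcases hx1 with (hxW | hxY) | hxI
            · exact Or.inr (Or.inl hxW)
            · exact Or.inl ⟨hYsub hxY, hx2⟩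
            · exact Or.inr (Or.inr hxI)
          have hfin2 : ((H i ∩ H j) ∪ (W ∪ I)).Finite :=
            (hHifin.subset inter_subset_left).union (hWfin.union hIfin)
          have hle1 := ncard_le_ncard hsub hfin2
          have hle2 := ncard_union_le (H i ∩ H j) (W ∪ I)
          have hle3 := ncard_union_le W I
          have hle4 := h1 i j (fun h => hji h.symm)
          omega
    obtain ⟨N, hN1, hN2⟩ := u24_minor' hfin hr3 hub hbc hZE hPE' hdisjZP hZc hPc hind
    exact hbinary ⟨N, hN1, hN2⟩
  -- rr i = 1 (else U_{2,4} minor inside H i)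
  have hrr1 : rr i = 1 := by
    by_contra hne1
    have hs2' : 2 ≤ rr i := by omega
    have hHic : rr i + 2 ≤ (H i).ncard := by omega
    obtain ⟨V, hVsub, hVc⟩ := Set.exists_subset_card_eq hHic
    have hVfin := hHifin.subset hVsub
    obtain ⟨P, hPV, hPc⟩ := Set.exists_subset_card_eq (show 4 ≤ V.ncard by omega)
    obtain ⟨Y, hYsub, hYc⟩ := Set.exists_subset_card_eq
      (show r - rr i ≤ (M.E \ H i).ncard by omega)
    have hYfin : Y.Finite := hcompfin.subset hYsub
    set W : Set α := V \ P with hW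
    have hWfin : W.Finite := hVfin.subset diff_subset
    have hWc : W.ncard = rr i - 2 := by
      rw [hW, ncard_diff hPV (hVfin.subset hPV), hVc, hPc]
      omega
    set Z : Set α := W ∪ Y with hZ
    have hdisjWY : Disjoint W Y :=
      disjoint_left.mpr fun x hxW hxY => (hYsub hxY).2 (hVsub hxW.1)
    have hZc : Z.ncard = r - 2 := by
      rw [hZ, ncard_union_eq hdisjWY hWfin hYfin, hWc, hYc]
      omega
    have hZE : Z ⊆ M.E :=
      union_subset (fun x hx => hH i (hVsub hx.1)) (hYsub.trans diff_subset)
    have hPE' : P ⊆ M.E := fun x hx => hH i (hVsub (hPV hx))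
    have hdisjZP : Disjoint Z P := by
      rw [hZ, disjoint_union_left]
      exact ⟨disjoint_sdiff_left,
        disjoint_left.mpr fun x hxY hxP => (hYsub hxY).2 (hVsub (hPV hxP))⟩
    have hind : ∀ I, I ⊆ P → I.ncard ≤ 2 → M.Indep (Z ∪ I) := by
      intro I hIP hI2
      have hIE : I ⊆ M.E := hIP.trans hPE'
      have hIfin : I.Finite := hfin.subset hIE
      apply (hMI _ (union_subset hZE hIE)).mpr
      constructor
      · have := ncard_union_le Z I
        omega
      · intro j
        by_cases hji : j = i
        · subst hji
          have hsub : (Z ∪ I) ∩ H j ⊆ W ∪ I := by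
            rintro x ⟨hx1, hx2⟩
            simp only [hZ, mem_union] at hx1
            rcases hx1 with (hxW | hxY) | hxI
            · exact Or.inl hxW
            · exact absurd hx2 (hYsub hxY).2
            · exact Or.inr hxI
          have hle1 := ncard_le_ncard hsub (hWfin.union hIfin)
          have hle2 := ncard_union_le W I
          omega
        · have hsub : (Z ∪ I) ∩ H j ⊆ (H i ∩ H j) ∪ Y := by
            rintro x ⟨hx1, hx2⟩
            simp only [hZ, mem_union] at hx1
            rcases hx1 with (hxW | hxY) | hxI
            · exact Or.inl ⟨hVsub hxW.1, hx2⟩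
            · exact Or.inr hxY
            · exact Or.inl ⟨hVsub (hPV (hIP hxI)), hx2⟩
          have hfin2 : ((H i ∩ H j) ∪ Y).Finite :=
            (hHifin.subset inter_subset_left).union hYfin
          have hle1 := ncard_le_ncard hsub hfin2
          have hle2 := ncard_union_le (H i ∩ H j) Y
          have hle4 := h1 i j (fun h => hji h.symm)
          omega
    obtain ⟨N, hN1, hN2⟩ := u24_minor' hfin hr3 hub hbc hZE hPE' hdisjZP hZc hPc hind
    exact hbinary ⟨N, hN1, hN2⟩
  -- basic positivity for all indices
  have hrrj1 : ∀ j, 1 ≤ rr j := by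
    intro j
    by_cases hji : j = i
    · subst hji; omega
    · have := h1 i j (fun h => hji h.symm)
      omega
  have hHine : (H i).Nonempty := nonempty_of_ncard_ne_zero (by have := h4 i; omega)
  obtain ⟨e, he⟩ := hHine
  have hmrkHi : mrk M (H i) = 1 := by
    apply le_antisymm
    · apply mrk_le_of'
      intro I hI hIH
      have hfi := hfacts I hI i
      rw [inter_eq_self_of_subset_left hIH] at hfi
      omega
    · have hsing : M.Indep {e} := by
        apply (hMI _ (singleton_subset_iff.mpr (hH i he))).mpr
        constructor
        · rw [ncard_singleton]; omega
        · intro j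
          have hle : ({e} ∩ H j).ncard ≤ ({e} : Set α).ncard :=
            ncard_le_ncard inter_subset_left (finite_singleton e)
          rw [ncard_singleton] at hle
          have := hrrj1 j
          omega
      have := le_mrk_of' hub hsing (singleton_subset_iff.mpr he)
      rwa [ncard_singleton] at this
  have hHiE : H i ≠ M.E := by
    intro heq
    have hd : M.E \ H i = ∅ := by rw [heq]; exact diff_self
    rw [hd, ncard_empty] at hcomplub
    omega
  have hconn1 := hconn (H i) (hH i) ⟨e, he⟩ hHiE
  rw [hrank, hmrkHi] at hconn1
  have hmrkcomp : mrk M (M.E \ H i) ≤ (M.E \ H i).ncard :=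
    mrk_le_of' (fun I hI hIsub => ncard_le_ncard hIsub hcompfin)
  have hcompr : (M.E \ H i).ncard = r := by omega
  -- q = 1
  have hq1 : q = 1 := by
    by_contra hq
    have hq2 : 2 ≤ q := by have := i.pos; omega
    have hex2 : ∃ j : Fin q, j ≠ i := by
      by_cases h0 : i.val = 0
      · exact ⟨⟨1, by omega⟩, fun h => by have := congrArg Fin.val h; simp at this; omega⟩
      · exact ⟨⟨0, by omega⟩, fun h => h0 (by have := congrArg Fin.val h; simp at this; omega)⟩
    obtain ⟨j, hji⟩ := hex2
    have h1ij := h1 i j (fun h => hji h.symm)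
    have h3j := h3 j
    rw [hrr1] at h1ij
    have hHij0 : (H i ∩ H j).ncard = 0 := by omega
    have hHijempty : H i ∩ H j = ∅ :=
      (ncard_eq_zero (hfin.subset (inter_subset_left.trans (hH i)))).mp hHij0
    have hHjsub : H j ⊆ M.E \ H i := by
      intro x hx
      refine ⟨hH j hx, fun hxi => ?_⟩
      have hmem : x ∈ H i ∩ H j := ⟨hxi, hx⟩
      rw [hHijempty] at hmem
      exact hmem
    have hHjcard : r ≤ (H j).ncard := by have := h4 j; omega
    have hHjeq : H j = M.E \ H i :=
      eq_of_subset_of_ncard_le hHjsub (by omega) hcompfin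
    have hmrkHj : mrk M (H j) ≤ r - 1 := by
      apply mrk_le_of'
      intro I hI hIH
      have hfj := hfacts I hI j
      rw [inter_eq_self_of_subset_left hIH] at hfj
      omega
    have hEHj : M.E \ H j = H i := by
      rw [hHjeq, diff_diff_cancel_left (hH i)]
    have hHjne : (H j).Nonempty := nonempty_of_ncard_ne_zero (by omega)
    have hHjneE : H j ≠ M.E := by
      intro h
      have hd : M.E \ H j = ∅ := by rw [h]; exact diff_self
      rw [hEHj] at hd
      rw [hd] at he
      exact he
    have hc2 := hconn (H j) (hH j) hHjne hHjneE
    rw [hrank, hEHj, hmrkHi] at hc2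
    omega
  refine ⟨hq1, fun i' => ?_⟩
  have hii' : i' = i := by
    apply Fin.ext
    have hlt1 := i.isLt
    have hlt2 := i'.isLt
    omega
  subst hii'
  refine ⟨hrr1, hcompr, fun X hX => ?_⟩
  rw [hMI X hX]
  constructor
  · rintro ⟨hc, hall⟩
    have := hall i'
    exact ⟨hc, by omega⟩
  · rintro ⟨hc, h1c⟩
    refine ⟨hc, fun j => ?_⟩
    have hj : j = i' := by
      apply Fin.ext
      have hlt1 := j.isLt
      have hlt2 := i'.isLt
      omega
    rw [hj, hrr1]
    exact h1c
end
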